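/- Let (λ*,μ*) ∈ D be a global minimizer of G_X with Y* = M_{λ*,μ*}^{−1}X ∈ V. Then ‖X − Y*‖ ≤ 2^{3/4} ‖X‖^{1/2} (|XᵀAX| + |XᵀBX|)^{1/4}; in particular X ∈ V implies Y* = X. -/

import Mathlib

open Matrix

/-- The 8×8 matrix `A = diag(S, -S, S, -S)` with `S = [[1,0],[0,0]]`. -/
noncomputable def A : Matrix (Fin 8) (Fin 8) ℝ :=
  !![1,0,0,0,0,0,0,0;
     0,0,0,0,0,0,0,0;
     0,0,-1,0,0,0,0,0;
     0,0,0,0,0,0,0,0;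
     0,0,0,0,1,0,0,0;
     0,0,0,0,0,0,0,0;
     0,0,0,0,0,0,-1,0;
     0,0,0,0,0,0,0,0]

/-- The 8×8 matrix `B = diag(T, -T, T, -T)` with `T = [[0,1],[1,0]]`. -/
noncomputable def B : Matrix (Fin 8) (Fin 8) ℝ :=
  !![0,1,0,0,0,0,0,0;
     1,0,0,0,0,0,0,0;
     0,0,0,-1,0,0,0,0;
     0,0,-1,0,0,0,0,0;
     0,0,0,0,0,1,0,0;
     0,0,0,0,1,0,0,0;
     0,0,0,0,0,0,0,-1;
     0,0,0,0,0,0,-1,0]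

/-- The matrix `M_{λ,μ} = I + λA + μB`. -/
noncomputable def M (l m : ℝ) : Matrix (Fin 8) (Fin 8) ℝ := 1 + l • A + m • B

namespace MinAux

lemma veceta (x : Fin 8 → ℝ) : x = ![x 0, x 1, x 2, x 3, x 4, x 5, x 6, x 7] := by
  funext i; fin_cases i <;> rfl

lemma quadA' (a b c d e f g h : ℝ) :
    (![a,b,c,d,e,f,g,h] : Fin 8 → ℝ) ⬝ᵥ (A *ᵥ ![a,b,c,d,e,f,g,h])
      = a^2 - c^2 + e^2 - g^2 := by
  simp [A, Matrix.mulVec, dotProduct, Fin.sum_univ_succ, Matrix.cons_val_zero,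
    Matrix.cons_val_succ]
  ring

lemma quadA (x : Fin 8 → ℝ) : x ⬝ᵥ (A *ᵥ x) = x 0^2 - x 2^2 + x 4^2 - x 6^2 := by
  conv_lhs => rw [veceta x]
  rw [quadA']

lemma quadB' (a b c d e f g h : ℝ) :
    (![a,b,c,d,e,f,g,h] : Fin 8 → ℝ) ⬝ᵥ (B *ᵥ ![a,b,c,d,e,f,g,h])
      = 2*(a*b - c*d + e*f - g*h) := by
  simp [B, Matrix.mulVec, dotProduct, Fin.sum_univ_succ, Matrix.cons_val_zero,
    Matrix.cons_val_succ]
  ring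

lemma quadB (x : Fin 8 → ℝ) : x ⬝ᵥ (B *ᵥ x) = 2*(x 0*x 1 - x 2*x 3 + x 4*x 5 - x 6*x 7) := by
  conv_lhs => rw [veceta x]
  rw [quadB']

lemma dotself' (a b c d e f g h : ℝ) :
    (![a,b,c,d,e,f,g,h] : Fin 8 → ℝ) ⬝ᵥ (![a,b,c,d,e,f,g,h] : Fin 8 → ℝ)
      = a^2+b^2+c^2+d^2+e^2+f^2+g^2+h^2 := by
  simp [dotProduct, Fin.sum_univ_succ, Matrix.cons_val_zero, Matrix.cons_val_succ]
  ring

lemma dotself (x : Fin 8 → ℝ) :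
    x ⬝ᵥ x = x 0^2+x 1^2+x 2^2+x 3^2+x 4^2+x 5^2+x 6^2+x 7^2 := by
  simp [dotProduct, Fin.sum_univ_eight]
  ring

lemma quadM (a b : ℝ) (x : Fin 8 → ℝ) : x ⬝ᵥ (M a b *ᵥ x) =
    (x ⬝ᵥ x) + a*(x ⬝ᵥ (A *ᵥ x)) + b*(x ⬝ᵥ (B *ᵥ x)) := by
  rw [M, Matrix.add_mulVec, Matrix.add_mulVec, Matrix.one_mulVec,
    Matrix.smul_mulVec, Matrix.smul_mulVec, dotProduct_add, dotProduct_add,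
    dotProduct_smul, dotProduct_smul, smul_eq_mul, smul_eq_mul]

lemma dot_self_nonneg (x : Fin 8 → ℝ) : 0 ≤ x ⬝ᵥ x :=
  Finset.sum_nonneg fun i _ => mul_self_nonneg _

set_option maxRecDepth 4000 in
lemma AT : Aᵀ = A := by
  ext i j
  fin_cases i <;> fin_cases j <;> rfl

set_option maxRecDepth 4000 in
lemma BT : Bᵀ = B := by
  ext i j
  fin_cases i <;> fin_cases j <;> rfl

lemma MT (a b : ℝ) : (M a b)ᵀ = M a b := by
  rw [M, Matrix.transpose_add, Matrix.transpose_add, Matrix.transpose_one,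
    Matrix.transpose_smul, Matrix.transpose_smul, AT, BT]

lemma hermM (a b : ℝ) : (M a b).IsHermitian := by
  rw [Matrix.IsHermitian, Matrix.conjTranspose_eq_transpose_of_trivial, MT]

lemma arith_coer (k s uu um uw : ℝ) (huu : 0 ≤ uu) (h1 : k*uu ≤ um)
    (h2 : (1-s)*uu + s*um = uw) (hs0 : 0 < s) : ((1-s) + s*k) * uu ≤ uw := by
  nlinarith

lemma arith_key4 (a p uu ww : ℝ) (ha : 0 < a) (h1 : a*uu ≤ p) (hCS : p^2 ≤ uu*ww)
    (huu : 0 ≤ uu) (hww : 0 ≤ ww) : a * p ≤ ww := by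
  nlinarith [mul_le_mul_of_nonneg_left hCS ha.le, mul_le_mul_of_nonneg_right h1 hww,
    mul_nonneg huu hww, sq_nonneg p]

lemma arith_base (P q Yw p t a : ℝ) (hbase : P ≤ q - Yw) (hYw : -(t*p) ≤ Yw)
    (hNw : t*(a*p) ≤ t*P) (ha : 0 < a) (ht : 0 < t) : a*P ≤ a*q + t*P := by
  nlinarith [mul_le_mul_of_nonneg_left hbase ha.le, mul_le_mul_of_nonneg_left hYw ha.le]

lemma le_of_forall_base (P q k : ℝ) (hk : 0 < k) (hP0 : 0 ≤ P)
    (H : ∀ t : ℝ, 0 < t → t < 1 → (t + (1-t)*k) * P ≤ (t + (1-t)*k) * q + t * P) :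
    P ≤ q := by
  have hstep : ∀ ε : ℝ, 0 < ε → P ≤ q + ε := by
    intro ε hε
    set t : ℝ := ε*k/(P + ε*k + 1) with ht
    have hden : 0 < P + ε*k + 1 := by nlinarith
    have ht0 : 0 < t := by rw [ht]; positivity
    have ht1 : t < 1 := by
      rw [ht, div_lt_one hden]; nlinarith
    have hb := H t ht0 ht1
    have htP : t * P ≤ ε*k*(1-t) := by
      have heq : t * (P + ε*k + 1) = ε*k := by
        rw [ht]; field_simp
      nlinarith [heq, ht0]
    have hκt : ε*k*(1-t) ≤ ε*(t + (1-t)*k) := by nlinarith [ht0, ht1]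
    have hαpos : 0 < t + (1-t)*k := by nlinarith
    nlinarith [hb, htP, hκt, hαpos]
  by_contra hc
  push_neg at hc
  have := hstep ((P - q)/2) (by linarith)
  linarith

lemma quadA_bound (x : Fin 8 → ℝ) : |x ⬝ᵥ (A *ᵥ x)| ≤ x ⬝ᵥ x := by
  rw [quadA, dotself, abs_le]
  constructor <;> nlinarith [sq_nonneg (x 0), sq_nonneg (x 1), sq_nonneg (x 2),
    sq_nonneg (x 3), sq_nonneg (x 4), sq_nonneg (x 5), sq_nonneg (x 6), sq_nonneg (x 7)]

lemma quadB_bound (x : Fin 8 → ℝ) : |x ⬝ᵥ (B *ᵥ x)| ≤ x ⬝ᵥ x := by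
  rw [quadB, dotself, abs_le]
  constructor <;> nlinarith [sq_nonneg (x 0 + x 1), sq_nonneg (x 0 - x 1),
    sq_nonneg (x 2 + x 3), sq_nonneg (x 2 - x 3), sq_nonneg (x 4 + x 5),
    sq_nonneg (x 4 - x 5), sq_nonneg (x 6 + x 7), sq_nonneg (x 6 - x 7)]

lemma abs_params_le_one {l m : ℝ} (hd1 : 0 < 1 - l - m^2) (hd2 : 0 < 1 + l - m^2) :
    |l| ≤ 1 ∧ |m| ≤ 1 := by
  constructor
  · rcases abs_cases l with ⟨h, _⟩ | ⟨h, _⟩ <;> rw [h] <;> nlinarith [sq_nonneg m]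
  · rcases abs_cases m with ⟨h, _⟩ | ⟨h, _⟩ <;> rw [h] <;> nlinarith [sq_nonneg m]

lemma mul_le_abs_right (l a : ℝ) (hl : |l| ≤ 1) : l * a ≤ |a| :=
  calc l*a ≤ |l*a| := le_abs_self _
    _ = |l| * |a| := abs_mul _ _
    _ ≤ 1 * |a| := mul_le_mul_of_nonneg_right hl (abs_nonneg a)
    _ = |a| := one_mul _

lemma final_bound (P S Q : ℝ) (hP0 : 0 ≤ P) (hS0 : 0 ≤ S) (hQ0 : 0 ≤ Q)
    (hPQ : P ≤ Q) (hQ2S : Q ≤ 2*S) :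
    Real.sqrt P ≤ (2:ℝ)^((3:ℝ)/4) * Real.sqrt S ^ ((1:ℝ)/2) * Q ^ ((1:ℝ)/4) := by
  have hRHS0 : 0 ≤ (2:ℝ) ^ ((3:ℝ)/4) * Real.sqrt S ^ ((1:ℝ)/2) * Q ^ ((1:ℝ)/4) := by
    positivity
  rw [show (2:ℝ) ^ ((3:ℝ)/4) * Real.sqrt S ^ ((1:ℝ)/2) * Q ^ ((1:ℝ)/4)
      = Real.sqrt (((2:ℝ) ^ ((3:ℝ)/4) * Real.sqrt S ^ ((1:ℝ)/2) * Q ^ ((1:ℝ)/4))^2)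
    from (Real.sqrt_sq hRHS0).symm]
  apply Real.sqrt_le_sqrt
  have hsq : ((2:ℝ) ^ ((3:ℝ)/4) * Real.sqrt S ^ ((1:ℝ)/2) * Q ^ ((1:ℝ)/4))^2
      = (2:ℝ) ^ ((3:ℝ)/2) * Real.sqrt S * Real.sqrt Q := by
    rw [mul_pow, mul_pow]
    rw [← Real.rpow_natCast ((2:ℝ) ^ ((3:ℝ)/4)) 2,
      ← Real.rpow_natCast (Real.sqrt S ^ ((1:ℝ)/2)) 2,
      ← Real.rpow_natCast (Q ^ ((1:ℝ)/4)) 2,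
      ← Real.rpow_mul (by norm_num : (0:ℝ) ≤ 2),
      ← Real.rpow_mul (Real.sqrt_nonneg S), ← Real.rpow_mul hQ0]
    norm_num
    exact Or.inl (Real.sqrt_eq_rpow Q).symm
  rw [hsq]
  have hsqQ : Real.sqrt Q ≤ Real.sqrt 2 * Real.sqrt S := by
    rw [← Real.sqrt_mul (by norm_num : (0:ℝ) ≤ 2)]
    exact Real.sqrt_le_sqrt hQ2S
  have h32 : Real.sqrt 2 ≤ (2:ℝ) ^ ((3:ℝ)/2) := by
    rw [Real.sqrt_eq_rpow]
    exact Real.rpow_le_rpow_of_exponent_le (by norm_num) (by norm_num)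
  have hQsq : Q = Real.sqrt Q * Real.sqrt Q := (Real.mul_self_sqrt hQ0).symm
  nlinarith [Real.sqrt_nonneg Q, Real.sqrt_nonneg S, Real.sqrt_nonneg 2,
    mul_le_mul_of_nonneg_right hsqQ (Real.sqrt_nonneg Q),
    mul_le_mul_of_nonneg_right h32 (mul_nonneg (Real.sqrt_nonneg S) (Real.sqrt_nonneg Q))]

lemma detUnit {P : Matrix (Fin 8) (Fin 8) ℝ} (h : P.PosDef) : IsUnit P.det := by
  rw [isUnit_iff_ne_zero]
  intro h0
  obtain ⟨v, hv, hv0⟩ := (Matrix.exists_mulVec_eq_zero_iff).2 h0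
  have h2 := h.dotProduct_mulVec_pos hv
  rw [hv0] at h2
  simp at h2

lemma dotsym {P : Matrix (Fin 8) (Fin 8) ℝ} (hP : Pᵀ = P) (x y : Fin 8 → ℝ) :
    x ⬝ᵥ (P *ᵥ y) = (P *ᵥ x) ⬝ᵥ y := by
  rw [Matrix.dotProduct_mulVec, ← Matrix.mulVec_transpose, hP]

lemma Mconvex (a b s : ℝ) :
    M (s*a) (s*b) = (1-s) • (1 : Matrix (Fin 8) (Fin 8) ℝ) + s • M a b := by
  rw [M, M]
  module

lemma posdef_scale {a b : ℝ} (h : (M a b).PosDef) {s : ℝ} (hs0 : 0 < s) (hs1 : s ≤ 1) :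
    (M (s*a) (s*b)).PosDef := by
  refine Matrix.PosDef.of_dotProduct_mulVec_pos (hermM _ _) (fun x hx => ?_)
  have h2 : 0 < x ⬝ᵥ (M a b *ᵥ x) := by simpa using h.dotProduct_mulVec_pos hx
  have hxx : 0 < x ⬝ᵥ x := by
    rcases lt_or_eq_of_le (dot_self_nonneg x) with h' | h'
    · exact h'
    · exact absurd (dotProduct_self_eq_zero.mp h'.symm) hx
  have key : x ⬝ᵥ (M (s*a) (s*b) *ᵥ x) = (1-s) * (x ⬝ᵥ x) + s * (x ⬝ᵥ (M a b *ᵥ x)) := by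
    rw [Mconvex, Matrix.add_mulVec, Matrix.smul_mulVec, Matrix.smul_mulVec,
      Matrix.one_mulVec, dotProduct_add, dotProduct_smul, dotProduct_smul,
      smul_eq_mul, smul_eq_mul]
  have : (0:ℝ) < x ⬝ᵥ (M (s*a) (s*b) *ᵥ x) := by
    rw [key]; nlinarith
  simpa using this

lemma quadform_nonneg (a b c u v : ℝ) (ha : 0 ≤ a) (hc : 0 ≤ c) (h : b^2 ≤ a*c) :
    0 ≤ a*u^2 + 2*b*u*v + c*v^2 := by
  rcases eq_or_lt_of_le ha with h0 | hapos
  · have hb : b = 0 := by nlinarith [sq_nonneg b]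
    rw [← h0, hb]
    have := mul_nonneg hc (sq_nonneg v)
    nlinarith [this]
  · nlinarith [sq_nonneg (a*u + b*v), mul_nonneg (sub_nonneg.2 h) (sq_nonneg v), hapos]

lemma blk (l m u v : ℝ) (h1 : 0 < 1 - l - m^2) (h2 : 0 < 1 + l - m^2) :
    (1-|l|-m^2)/3*(u^2+v^2) ≤ (1+l)*u^2 + 2*m*u*v + v^2 := by
  rcases abs_cases l with ⟨h, hl⟩ | ⟨h, hl⟩ <;> rw [h]
  · have key := quadform_nonneg (1+l-(1-l-m^2)/3) m (1-(1-l-m^2)/3) u v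
      (by nlinarith) (by nlinarith)
      (by nlinarith [mul_nonneg hl (sq_nonneg m), mul_nonneg hl h1.le, sq_nonneg m,
        mul_nonneg (sq_nonneg m) h1.le, mul_nonneg h1.le h1.le])
    nlinarith [key]
  · have key := quadform_nonneg (1+l-(1+l-m^2)/3) m (1-(1+l-m^2)/3) u v
      (by nlinarith) (by nlinarith)
      (by nlinarith [sq_nonneg m, mul_nonneg (sq_nonneg m) h2.le, mul_nonneg h2.le h2.le])
    nlinarith [key]

end MinAux

open MinAux in
/-- Error estimate for the dual projection: at a global minimizer of `G_X`,
`‖X - Y*‖ ≤ 2^{3/4} ‖X‖^{1/2} (|XᵀAX| + |XᵀBX|)^{1/4}`; in particular `X ∈ V` implies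
`Y* = X`. -/
theorem minimizer_error_estimate (X : Fin 8 → ℝ) (l m : ℝ)
    (hpos : (M l m).PosDef)
    (hmin : ∀ l' m' : ℝ, (M l' m').PosDef →
      X ⬝ᵥ ((M l m)⁻¹).mulVec X ≤ X ⬝ᵥ ((M l' m')⁻¹).mulVec X) :
    Real.sqrt ((X - (M l m)⁻¹.mulVec X) ⬝ᵥ (X - (M l m)⁻¹.mulVec X))
      ≤ (2 : ℝ) ^ ((3:ℝ)/4) * Real.sqrt (X ⬝ᵥ X) ^ ((1:ℝ)/2)
        * (|X ⬝ᵥ A.mulVec X| + |X ⬝ᵥ B.mulVec X|) ^ ((1:ℝ)/4) ∧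
    (X ⬝ᵥ A.mulVec X = 0 ∧ X ⬝ᵥ B.mulVec X = 0 → (M l m)⁻¹.mulVec X = X) := by
  -- ## Setup
  set E : Matrix (Fin 8) (Fin 8) ℝ := l • A + m • B with hE
  have hMdef : M l m = 1 + E := by rw [M, hE, add_assoc]
  have hdet : IsUnit (M l m).det := detUnit hpos
  set N := (M l m)⁻¹ with hN
  have hMN : M l m * N = 1 := Matrix.mul_nonsing_inv _ hdet
  set Y := N *ᵥ X with hY
  have hMY : M l m *ᵥ Y = X := by rw [hY, Matrix.mulVec_mulVec, hMN, Matrix.one_mulVec]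
  set w : Fin 8 → ℝ := E *ᵥ Y with hw
  have hXYw : X = Y + w := by
    rw [← hMY, hMdef, Matrix.add_mulVec, Matrix.one_mulVec, hw]
  have hXsubY : X - Y = w := by rw [hXYw]; abel
  have hET : Eᵀ = E := by
    rw [hE, Matrix.transpose_add, Matrix.transpose_smul, Matrix.transpose_smul, AT, BT]
  clear_value E N Y w
  -- ## basic positivity facts from hpos
  have hd1 : 0 < 1 - l - m^2 := by
    have hv : (![0,0,1,m,0,0,0,0] : Fin 8 → ℝ) ≠ 0 := by
      intro h
      have := congrFun h 2
      simp at this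
    have h2 := hpos.dotProduct_mulVec_pos hv
    simp only [star_trivial] at h2
    rw [quadM, quadA', quadB', dotself'] at h2
    nlinarith [h2]
  have hd2 : 0 < 1 + l - m^2 := by
    have hv : (![1,-m,0,0,0,0,0,0] : Fin 8 → ℝ) ≠ 0 := by
      intro h
      have := congrFun h 0
      simp at this
    have h2 := hpos.dotProduct_mulVec_pos hv
    simp only [star_trivial] at h2
    rw [quadM, quadA', quadB', dotself'] at h2
    nlinarith [h2]
  set κ : ℝ := (1-|l|-m^2)/3 with hκ
  have hκpos : 0 < κ := by
    rcases abs_cases l with ⟨h, _⟩ | ⟨h, _⟩ <;> rw [hκ, h] <;> linarith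
  have hκ1 : κ ≤ 1 := by
    have := abs_nonneg l
    rw [hκ]; nlinarith
  clear_value κ
  -- uniform coercivity of M l m
  have qMbound : ∀ x : Fin 8 → ℝ, κ * (x ⬝ᵥ x) ≤ x ⬝ᵥ (M l m *ᵥ x) := by
    intro x
    have b1 := blk l m (x 0) (x 1) hd1 hd2
    have b2 := blk (-l) (-m) (x 2) (x 3) (by linarith) (by nlinarith)
    have b3 := blk l m (x 4) (x 5) hd1 hd2
    have b4 := blk (-l) (-m) (x 6) (x 7) (by linarith) (by nlinarith)
    rw [abs_neg, neg_sq] at b2 b4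
    rw [quadM, quadA, quadB, dotself, hκ]
    linarith [b1, b2, b3, b4]
  -- ## the key estimate : w ⬝ᵥ w ≤ q
  set q : ℝ := X ⬝ᵥ (E *ᵥ X) with hq
  set P : ℝ := w ⬝ᵥ w with hP
  have hP0 : 0 ≤ P := by rw [hP]; exact dot_self_nonneg w
  clear_value q P
  -- base inequality
  have base : ∀ t : ℝ, 0 < t → t < 1 →
      (t + (1-t)*κ) * P ≤ (t + (1-t)*κ) * q + t * P := by
    intro t ht0 ht1
    set s : ℝ := 1 - t with hs
    have hs0 : 0 < s := by rw [hs]; linarith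
    have hs1 : s ≤ 1 := by rw [hs]; linarith
    have hpds : (M (s*l) (s*m)).PosDef := posdef_scale hpos hs0 hs1
    have hdets : IsUnit (M (s*l) (s*m)).det := detUnit hpds
    set Ns := (M (s*l) (s*m))⁻¹ with hNs
    have hMsNs : M (s*l) (s*m) * Ns = 1 := Matrix.mul_nonsing_inv _ hdets
    have hNsMs : Ns * M (s*l) (s*m) = 1 := Matrix.nonsing_inv_mul _ hdets
    have hNsT : Nsᵀ = Ns := by
      rw [hNs, Matrix.transpose_nonsing_inv, MT]
    clear_value Ns
    -- difference of inverses
    have hMdiff : M l m - M (s*l) (s*m) = t • E := by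
      rw [M, M, hE, hs]; module
    have hdiff : Ns - N = t • (Ns * E * N) := by
      have e1 : Ns * M l m * N = Ns := by rw [mul_assoc, hMN, mul_one]
      have e2 : Ns * M (s*l) (s*m) * N = N := by rw [hNsMs, one_mul]
      calc Ns - N = Ns * M l m * N - Ns * M (s*l) (s*m) * N := by rw [e1, e2]
        _ = Ns * (M l m - M (s*l) (s*m)) * N := by rw [Matrix.mul_sub, Matrix.sub_mul]
        _ = t • (Ns * E * N) := by rw [hMdiff, Matrix.mul_smul, Matrix.smul_mul]
    have hNsENX : (Ns * E * N) *ᵥ X = Ns *ᵥ w := by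
      rw [← Matrix.mulVec_mulVec, ← Matrix.mulVec_mulVec, ← hY, ← hw]
    -- minimality gives : 0 ≤ (Ns *ᵥ X) ⬝ᵥ w
    have hm := hmin (s*l) (s*m) hpds
    have key1 : 0 ≤ (Ns *ᵥ X) ⬝ᵥ w := by
      have e3 : X ⬝ᵥ (Ns *ᵥ X) - X ⬝ᵥ (N *ᵥ X) = t * (X ⬝ᵥ (Ns *ᵥ w)) := by
        rw [← dotProduct_sub, ← Matrix.sub_mulVec, hdiff, Matrix.smul_mulVec,
          hNsENX, dotProduct_smul, smul_eq_mul]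
      have hm' : X ⬝ᵥ Y ≤ X ⬝ᵥ (Ns *ᵥ X) := by rw [hNs]; exact hm
      have e4 : 0 ≤ t * (X ⬝ᵥ (Ns *ᵥ w)) := by
        rw [← e3, ← hY]
        linarith [hm']
      have e5 : 0 ≤ X ⬝ᵥ (Ns *ᵥ w) := by nlinarith [e4, ht0]
      rw [← dotsym hNsT]; exact e5
    -- decomposition of Y
    have key2 : Y = Ns *ᵥ X - t • (Ns *ᵥ w) := by
      have : N = Ns - t • (Ns * E * N) := by rw [← hdiff]; abel
      rw [hY, this, Matrix.sub_mulVec, Matrix.smul_mulVec, hNsENX]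
    have key3 : Y ⬝ᵥ w = (Ns *ᵥ X) ⬝ᵥ w - t * ((Ns *ᵥ w) ⬝ᵥ w) := by
      rw [key2, sub_dotProduct, smul_dotProduct, smul_eq_mul]
    -- PSD bound : (Ns *ᵥ w) ⬝ᵥ w ≤ (w ⬝ᵥ w)/α  with α = s + ... here α = (t + (1-t)κ)? no
    set α : ℝ := t + (1-t)*κ with hα
    have hαpos : 0 < α := by rw [hα]; nlinarith
    clear_value α
    have key4 : α * ((Ns *ᵥ w) ⬝ᵥ w) ≤ P := by
      set u := Ns *ᵥ w with hu
      have huw : M (s*l) (s*m) *ᵥ u = w := by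
        rw [hu, Matrix.mulVec_mulVec, hMsNs, Matrix.one_mulVec]
      clear_value u
      have hq1 : u ⬝ᵥ (M (s*l) (s*m) *ᵥ u) = (1-s) * (u ⬝ᵥ u) + s * (u ⬝ᵥ (M l m *ᵥ u)) := by
        rw [Mconvex, Matrix.add_mulVec, Matrix.smul_mulVec, Matrix.smul_mulVec,
          Matrix.one_mulVec, dotProduct_add, dotProduct_smul, dotProduct_smul,
          smul_eq_mul, smul_eq_mul]
      have hcoer : α * (u ⬝ᵥ u) ≤ u ⬝ᵥ w := by
        have h1 := qMbound u
        have h2 : (1-s) * (u ⬝ᵥ u) + s * (u ⬝ᵥ (M l m *ᵥ u)) = u ⬝ᵥ w := by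
          rw [← hq1, huw]
        have huu := dot_self_nonneg u
        have h3 := arith_coer κ s (u ⬝ᵥ u) (u ⬝ᵥ (M l m *ᵥ u)) (u ⬝ᵥ w) huu h1 h2 hs0
        have hαeq : α = (1-s) + s*κ := by rw [hα, hs]; ring
        rw [hαeq]
        exact h3
      have hCS : (u ⬝ᵥ w)^2 ≤ (u ⬝ᵥ u) * (w ⬝ᵥ w) := by
        have := Finset.sum_mul_sq_le_sq_mul_sq Finset.univ u w
        simpa [dotProduct, sq] using this
      have hww := dot_self_nonneg w
      have huu := dot_self_nonneg u
      rw [hP]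
      exact arith_key4 α (u ⬝ᵥ w) (u ⬝ᵥ u) (w ⬝ᵥ w) hαpos hcoer hCS huu hww
    -- quadratic identity for q
    have hqid : q = Y ⬝ᵥ w + 2*P + w ⬝ᵥ (E *ᵥ w) := by
      have e6 : E *ᵥ X = w + E *ᵥ w := by
        rw [hXYw, Matrix.mulVec_add, ← hw]
      have e7 : Y ⬝ᵥ (E *ᵥ w) = w ⬝ᵥ w := by rw [dotsym hET, ← hw]
      rw [hq, e6, hXYw, add_dotProduct, dotProduct_add, dotProduct_add, e7, hP]
      ring
    have hpsd : 0 ≤ P + w ⬝ᵥ (E *ᵥ w) := by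
      have := hpos.posSemidef.dotProduct_mulVec_nonneg w
      simp only [star_trivial] at this
      rw [hMdef, Matrix.add_mulVec, Matrix.one_mulVec, dotProduct_add] at this
      rw [hP]; linarith
    -- combine
    have hbase : P ≤ q - Y ⬝ᵥ w := by
      have : Y ⬝ᵥ w + 2*P + w ⬝ᵥ (E *ᵥ w) = q := hqid.symm
      linarith [hpsd]
    have hYw : -(t * ((Ns *ᵥ w) ⬝ᵥ w)) ≤ Y ⬝ᵥ w := by
      rw [key3]; linarith [key1]
    have hNw : t * (α * ((Ns *ᵥ w) ⬝ᵥ w)) ≤ t * P :=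
      mul_le_mul_of_nonneg_left key4 ht0.le
    exact arith_base P q (Y ⬝ᵥ w) ((Ns *ᵥ w) ⬝ᵥ w) t α hbase hYw hNw hαpos ht0
  -- from base : P ≤ q
  have hPq : P ≤ q := le_of_forall_base P q κ hκpos hP0 base
  -- ## bounding q by Q
  set QA : ℝ := X ⬝ᵥ (A *ᵥ X) with hQA
  set QB : ℝ := X ⬝ᵥ (B *ᵥ X) with hQB
  set S : ℝ := X ⬝ᵥ X with hS
  have hS0 : 0 ≤ S := by rw [hS]; exact dot_self_nonneg X
  clear_value QA QB S
  have hqlm : q = l * QA + m * QB := by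
    rw [hq, hQA, hQB, hE, Matrix.add_mulVec, Matrix.smul_mulVec, Matrix.smul_mulVec,
      dotProduct_add, dotProduct_smul, dotProduct_smul, smul_eq_mul, smul_eq_mul]
  obtain ⟨hl1, hm1⟩ := abs_params_le_one hd1 hd2
  set Q : ℝ := |QA| + |QB| with hQ
  have hQ0 : 0 ≤ Q := by rw [hQ]; positivity
  clear_value Q
  have hqQ : q ≤ Q := by
    rw [hqlm, hQ]
    exact add_le_add (mul_le_abs_right l QA hl1) (mul_le_abs_right m QB hm1)
  have hQA_S : |QA| ≤ S := by rw [hQA, hS]; exact quadA_bound X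
  have hQB_S : |QB| ≤ S := by rw [hQB, hS]; exact quadB_bound X
  have hQ2S : Q ≤ 2*S := by rw [hQ]; linarith
  -- ## conclusion
  have hPQ : P ≤ Q := le_trans hPq hqQ
  constructor
  · -- the error estimate
    rw [hXsubY, ← hP]
    exact final_bound P S Q hP0 hS0 hQ0 hPQ hQ2S
  · -- X ∈ V implies Y = X
    rintro ⟨hA0, hB0⟩
    have hQ0' : Q = 0 := by rw [hQ, hA0, hB0]; simp
    have hPle : P ≤ 0 := by rw [← hQ0']; exact hPQ
    have hw0 : w = 0 := by
      have : w ⬝ᵥ w = 0 := by rw [← hP]; exact le_antisymm hPle hP0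
      exact dotProduct_self_eq_zero.mp this
    have hXY : X = Y := by rw [hXYw, hw0, add_zero]
    exact hXY.symm
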